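/- Let M be a locally compact abelian group and α a compacting automorphism, i.e., there is a compact subset Ω ⊆ M with α(Ω) ⊆ Ω and M = ⋃_{n≥0} α^{-n}(Ω). Then every discrete quotient module N of M (by a closed α-invariant subgroup) is locally finite as a ℤ[α^{±1}]-module: every element of N generates a finite α-invariant subgroup. -/

import Mathlib

open Filter Topology

/-- let `M` be a locally compact abelian group and `α` a compacting
topological automorphism (there is a compact `Ω` with `α(Ω) ⊆ Ω` and `M = ⋃ₙ α⁻ⁿ(Ω)`).
Then every discrete quotient module `M/N` of `M` (by an open `α`-invariant subgroup `N`)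
is locally finite as a `ℤ[α^{±1}]`-module: every element lies in a finite subgroup
invariant under the induced automorphism. -/
theorem stmt17 {M : Type*} [AddCommGroup M] [TopologicalSpace M] [IsTopologicalAddGroup M]
    [LocallyCompactSpace M]
    (α : M ≃+ M) (hc : Continuous α) (hc' : Continuous α.symm)
    (Ω : Set M) (hΩc : IsCompact Ω) (hΩinv : α '' Ω ⊆ Ω)
    (hcover : ∀ x : M, ∃ n : ℕ, (⇑α)^[n] x ∈ Ω)
    (N : AddSubgroup M) (hNo : IsOpen (N : Set M))
    (hNinv : N.map α.toAddMonoidHom = N)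
    (β : M ⧸ N →+ M ⧸ N)
    (hβ : ∀ x : M, β (QuotientAddGroup.mk x) = QuotientAddGroup.mk (α x)) :
    ∀ y : M ⧸ N, ∃ H : AddSubgroup (M ⧸ N),
      y ∈ H ∧ (H : Set (M ⧸ N)).Finite ∧ ∀ z ∈ H, β z ∈ H := by
  -- the quotient is discrete
  have hdisc : DiscreteTopology (M ⧸ N) := QuotientAddGroup.discreteTopology hNo
  -- the image of Ω is finite
  set S : Set (M ⧸ N) := QuotientAddGroup.mk '' Ω with hS
  have hScomp : IsCompact S := hΩc.image continuous_quot_mk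
  have hSfin : S.Finite := hScomp.finite_of_discrete
  -- β is injective, using the inverse induced by α.symm
  have hNle : N ≤ N.comap α.symm.toAddMonoidHom := by
    intro x hx
    rw [← hNinv] at hx
    rcases hx with ⟨y, hy, rfl⟩
    show α.symm (α y) ∈ N
    simpa using hy
  set γ : M ⧸ N →+ M ⧸ N := QuotientAddGroup.map N N α.symm.toAddMonoidHom hNle with hγ
  have hγβ : ∀ z : M ⧸ N, γ (β z) = z := by
    intro z
    induction z using QuotientAddGroup.induction_on with
    | H x => rw [hβ]; simp [hγ, QuotientAddGroup.map_mk]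
  have hβinj : Function.Injective β := by
    intro a b hab
    have := congrArg γ hab
    rwa [hγβ, hγβ] at this
  -- β maps S into S
  have hβS : Set.MapsTo β S S := by
    rintro _ ⟨x, hx, rfl⟩
    exact ⟨α x, hΩinv ⟨x, hx, rfl⟩, (hβ x).symm⟩
  -- hence β restricted to S is a bijection, so β z ∈ S → z ∈ S
  have hSurj : Set.SurjOn β S S :=
    ((Set.Finite.injOn_iff_bijOn_of_mapsTo hSfin hβS).mp hβinj.injOn).surjOn
  have hback : ∀ z : M ⧸ N, β z ∈ S → z ∈ S := by
    intro z hz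
    rcases hSurj hz with ⟨s, hs, hs'⟩
    rwa [← hβinj hs']
  -- every element of the quotient lies in S
  have hall : ∀ z : M ⧸ N, z ∈ S := by
    intro z
    induction z using QuotientAddGroup.induction_on with
    | H x =>
      rcases hcover x with ⟨n, hn⟩
      have key : ∀ n : ℕ, ∀ x : M, (⇑α)^[n] x ∈ Ω → (QuotientAddGroup.mk x : M ⧸ N) ∈ S := by
        intro n
        induction n with
        | zero => intro x hx; exact ⟨x, hx, rfl⟩
        | succ k ih =>
          intro x hx
          have : (⇑α)^[k] (α x) ∈ Ω := by
            rwa [← Function.iterate_succ_apply] 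
          have h1 : (QuotientAddGroup.mk (α x) : M ⧸ N) ∈ S := ih (α x) this
          rw [← hβ] at h1
          exact hback _ h1
      exact key n x hn
  intro y
  refine ⟨⊤, trivial, ?_, fun z _ => trivial⟩
  exact Set.Finite.subset hSfin (fun z _ => hall z)
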